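/- For a deck D of n distinct cards (so N = n! reorderings), the first-order variation distance coefficient satisfies κ_1(D) = (n/(4·n!)) · Σ_{d=0}^{n-1} A(n,d)·|n-1-2d|, where A(n,d) is the Eulerian number. Equivalently, (1/2)·Σ_{π ∈ S_n} |c_1(D, πD)| = (n/(4·n!))·Σ_{π ∈ S_n} |asc(π) − des(π)|. -/

import Mathlib

open scoped Classical

/-- `W D u v`: number of u-v digraphs minus number of v-u digraphs in deck `D`. -/
noncomputable def Wdig {n : ℕ} {V : Type*} (D : Fin n → V) (u v : V) : ℤ :=
  ((Finset.univ.filter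
      (fun i : Fin n => ∃ h : i.1 + 1 < n, D i = u ∧ D ⟨i.1 + 1, h⟩ = v)).card : ℤ) -
  ((Finset.univ.filter
      (fun i : Fin n => ∃ h : i.1 + 1 < n, D i = v ∧ D ⟨i.1 + 1, h⟩ = u)).card : ℤ)

/-- `Z D u v`: number of u-v pairs minus number of v-u pairs in deck `D`. -/
noncomputable def Zpair {n : ℕ} {V : Type*} (D : Fin n → V) (u v : V) : ℤ :=
  ((Finset.univ.filter
      (fun p : Fin n × Fin n => p.1 < p.2 ∧ D p.1 = u ∧ D p.2 = v)).card : ℤ) -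
  ((Finset.univ.filter
      (fun p : Fin n × Fin n => p.1 < p.2 ∧ D p.1 = v ∧ D p.2 = u)).card : ℤ)
/-- Number of descents of a permutation of `Fin n`. -/
noncomputable def des {n : ℕ} (π : Equiv.Perm (Fin n)) : ℕ :=
  (Finset.univ.filter
    (fun i : Fin n => ∃ h : i.1 + 1 < n, π i > π ⟨i.1 + 1, h⟩)).card

lemma card_zero_of {α : Type*} [Fintype α] (p : α → Prop) (inst : DecidablePred p)
    (h : ∀ a, ¬ p a) : (@Finset.filter α p inst Finset.univ).card = 0 := by
  rw [Finset.card_eq_zero]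
  ext a
  simp [h a]

lemma card_one_of {α : Type*} [Fintype α] (p : α → Prop) (inst : DecidablePred p) (a : α)
    (h : ∀ b, p b ↔ b = a) : (@Finset.filter α p inst Finset.univ).card = 1 := by
  rw [Finset.card_eq_one]
  refine ⟨a, ?_⟩
  ext b
  simp [h b]

lemma Wdig_id {n : ℕ} (u v : Fin n) (huv : u < v) :
    Wdig (id : Fin n → Fin n) u v = if v.1 = u.1 + 1 then 1 else 0 := by
  unfold Wdig
  rw [card_zero_of (fun i : Fin n => ∃ h : i.1 + 1 < n, (id i : Fin n) = v ∧ (id ⟨i.1 + 1, h⟩ : Fin n) = u) _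
    (by rintro i ⟨h, rfl, rfl⟩; simp [Fin.lt_def] at huv)]
  by_cases hv : v.1 = u.1 + 1
  · rw [card_one_of (fun i : Fin n => ∃ h : i.1 + 1 < n, (id i : Fin n) = u ∧ (id ⟨i.1 + 1, h⟩ : Fin n) = v) _ u]
    · simp [hv]
    · intro b
      constructor
      · rintro ⟨h, rfl, rfl⟩; rfl
      · rintro rfl
        refine ⟨by omega, rfl, ?_⟩
        exact Fin.ext hv.symm
  · rw [card_zero_of (fun i : Fin n => ∃ h : i.1 + 1 < n, (id i : Fin n) = u ∧ (id ⟨i.1 + 1, h⟩ : Fin n) = v) _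
      (by rintro i ⟨h, rfl, rfl⟩; simp at hv)]
    simp [hv]

lemma zfilter {n : ℕ} (π : Equiv.Perm (Fin n)) (u v : Fin n)
    (inst : DecidablePred fun p : Fin n × Fin n => p.1 < p.2 ∧ π.symm p.1 = u ∧ π.symm p.2 = v) :
    (@Finset.filter _ _ inst Finset.univ).card
      = if π u < π v then 1 else 0 := by
  have hset : (@Finset.filter _ _ inst Finset.univ)
      = if π u < π v then {(π u, π v)} else ∅ := by
    ext p
    simp only [Finset.mem_filter, Finset.mem_univ, true_and, Equiv.symm_apply_eq]
    split
    · case isTrue h =>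
      simp only [Finset.mem_singleton, Prod.ext_iff]
      constructor
      · rintro ⟨_, h1, h2⟩; exact ⟨h1, h2⟩
      · rintro ⟨h1, h2⟩; exact ⟨by rw [h1, h2]; exact h, h1, h2⟩
    · case isFalse h =>
      simp only [Finset.notMem_empty, iff_false]
      rintro ⟨hlt, h1, h2⟩
      exact h (h1 ▸ h2 ▸ hlt)
  rw [hset]
  split <;> simp

lemma Zpair_perm {n : ℕ} (π : Equiv.Perm (Fin n)) (u v : Fin n) (huv : u ≠ v) :
    Zpair (fun i => π.symm i) u v = if π u < π v then 1 else -1 := by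
  unfold Zpair
  beta_reduce
  rw [zfilter π u v, zfilter π v u]
  have : π u ≠ π v := fun h => huv (π.injective h)
  rcases lt_or_gt_of_ne this with h | h
  · simp [h, not_lt_of_gt h, le_of_lt h]
  · simp [h, not_lt_of_gt h]

lemma card_succ_pairs {n : ℕ} (hn : 1 ≤ n) :
    (Finset.univ.filter (fun i : Fin n => i.1 + 1 < n)).card = n - 1 := by
  have : (Finset.univ.filter (fun i : Fin n => i.1 + 1 < n))
      = Finset.univ.erase ⟨n - 1, by omega⟩ := by
    ext i
    simp only [Finset.mem_filter, Finset.mem_univ, true_and, Finset.mem_erase, and_true]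
    have h2 := i.2
    constructor
    · intro h heq
      subst heq
      simp at h
      omega
    · intro h
      by_contra h'
      exact h (Fin.ext (by simp; omega))
  rw [this, Finset.card_erase_of_mem (Finset.mem_univ _)]
  simp

lemma card_pairs_total {n : ℕ} (hn : 1 ≤ n)
    {inst : DecidablePred fun p : Fin n × Fin n => p.2.1 = p.1.1 + 1} :
    (@Finset.filter _ _ inst Finset.univ).card = n - 1 := by
  have key : (@Finset.filter _ _ inst Finset.univ).card
      = (Finset.univ.filter (fun i : Fin n => i.1 + 1 < n)).card := by
    apply Finset.card_nbij (fun p => p.1)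
    · rintro ⟨p1, p2⟩ hp
      simp only [Finset.mem_coe, Finset.mem_filter, Finset.mem_univ, true_and] at hp ⊢
      have := p2.2
      omega
    · rintro ⟨p1, p2⟩ hp ⟨q1, q2⟩ hq h
      simp only [Finset.mem_coe, Finset.mem_filter, Finset.mem_univ, true_and] at hp hq
      simp only at h
      subst h
      simp only [Prod.mk.injEq, true_and]
      exact Fin.ext (by omega)
    · rintro i hi
      simp only [Finset.mem_coe, Finset.mem_filter, Finset.mem_univ, true_and] at hi
      exact ⟨(i, ⟨i.1 + 1, hi⟩), by simp, rfl⟩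
  rw [key, card_succ_pairs hn]

lemma card_pairs_des {n : ℕ} (π : Equiv.Perm (Fin n))
    {inst : DecidablePred fun p : Fin n × Fin n => p.2.1 = p.1.1 + 1 ∧ π p.1 > π p.2} :
    (@Finset.filter _ _ inst Finset.univ).card = des π := by
  unfold des
  apply Finset.card_nbij (fun p => p.1)
  · rintro ⟨p1, p2⟩ hp
    simp only [Finset.mem_coe, Finset.mem_filter, Finset.mem_univ, true_and] at hp ⊢
    obtain ⟨h1, h2⟩ := hp
    have hh : p1.1 + 1 < n := h1 ▸ p2.2
    refine ⟨hh, ?_⟩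
    have : p2 = ⟨p1.1 + 1, hh⟩ := Fin.ext h1
    exact this ▸ h2
  · rintro ⟨p1, p2⟩ hp ⟨q1, q2⟩ hq h
    simp only [Finset.mem_coe, Finset.mem_filter, Finset.mem_univ, true_and] at hp hq
    simp only at h
    subst h
    simp only [Prod.mk.injEq, true_and]
    exact Fin.ext (by omega)
  · rintro i hi
    simp only [Finset.mem_coe, Finset.mem_filter, Finset.mem_univ, true_and] at hi
    obtain ⟨h, hC⟩ := hi
    exact ⟨(i, ⟨i.1 + 1, h⟩), by simp [hC], rfl⟩

lemma kappa_inner_sum {n : ℕ} (hn : 1 ≤ n) (π : Equiv.Perm (Fin n)) :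
    ∑ p ∈ Finset.univ.filter (fun p : Fin n × Fin n => p.1 < p.2),
        (Wdig (id : Fin n → Fin n) p.1 p.2 : ℝ) * (Zpair (fun i => π.symm i) p.1 p.2 : ℝ)
      = (n : ℝ) - 1 - 2 * (des π : ℝ) := by
  have hstep : ∀ p ∈ Finset.univ.filter (fun p : Fin n × Fin n => p.1 < p.2),
      (Wdig (id : Fin n → Fin n) p.1 p.2 : ℝ) * (Zpair (fun i => π.symm i) p.1 p.2 : ℝ)
        = if p.2.1 = p.1.1 + 1 then (1 - 2 * if π p.1 > π p.2 then (1 : ℝ) else 0) else 0 := by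
    intro p hp
    simp only [Finset.mem_filter, Finset.mem_univ, true_and] at hp
    rw [Wdig_id p.1 p.2 hp, Zpair_perm π p.1 p.2 (ne_of_lt hp)]
    have hne : π p.1 ≠ π p.2 := fun hh => (ne_of_lt hp) (π.injective hh)
    by_cases h1 : p.2.1 = p.1.1 + 1
    · rcases hne.lt_or_gt with h | h
      · simp [h1, h, lt_asymm h]
      · simp [h1, h, lt_asymm h]
        norm_num
    · simp [h1]
  rw [Finset.sum_congr rfl hstep, ← Finset.sum_filter]
  have hSet : (Finset.univ.filter (fun p : Fin n × Fin n => p.1 < p.2)).filter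
        (fun p => p.2.1 = p.1.1 + 1)
      = Finset.univ.filter (fun p : Fin n × Fin n => p.2.1 = p.1.1 + 1) := by
    ext p
    simp only [Finset.mem_filter, Finset.mem_univ, true_and]
    constructor
    · rintro ⟨_, h⟩; exact h
    · intro h; exact ⟨Fin.lt_def.mpr (by omega), h⟩
  rw [hSet, Finset.sum_sub_distrib, Finset.sum_const, ← Finset.mul_sum, Finset.sum_boole]
  have hcard2 : (Finset.univ.filter
        (fun p : Fin n × Fin n => p.2.1 = p.1.1 + 1)).filter (fun p => π p.1 > π p.2)
      = Finset.univ.filter (fun p : Fin n × Fin n => p.2.1 = p.1.1 + 1 ∧ π p.1 > π p.2) := by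
    rw [Finset.filter_filter]
  rw [hcard2, card_pairs_des π, card_pairs_total hn]
  have hn1 : ((n - 1 : ℕ) : ℝ) = (n : ℝ) - 1 := by
    push_cast [Nat.cast_sub hn]; ring
  rw [nsmul_eq_mul, hn1]
  ring

lemma des_lt {n : ℕ} (hn : 1 ≤ n) (π : Equiv.Perm (Fin n)) : des π < n := by
  have hsub : (Finset.univ.filter
        (fun i : Fin n => ∃ h : i.1 + 1 < n, π i > π ⟨i.1 + 1, h⟩))
      ⊆ Finset.univ.filter (fun i : Fin n => i.1 + 1 < n) := by
    intro i hi
    simp only [Finset.mem_filter, Finset.mem_univ, true_and] at hi ⊢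
    obtain ⟨h, _⟩ := hi
    exact h
  have := Finset.card_le_card hsub
  rw [card_succ_pairs hn] at this
  unfold des
  omega

theorem kappa1_all_distinct (n : ℕ) (hn : 1 ≤ n) :
    (1 / 2 : ℝ) * ∑ π : Equiv.Perm (Fin n),
        |((n : ℝ) / (2 * (n.factorial : ℝ))) *
          ∑ p ∈ Finset.univ.filter (fun p : Fin n × Fin n => p.1 < p.2),
            (Wdig (id : Fin n → Fin n) p.1 p.2 : ℝ) *
              (Zpair (fun i => π.symm i) p.1 p.2 : ℝ)| =
      ((n : ℝ) / (4 * (n.factorial : ℝ))) *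
        ∑ d ∈ Finset.range n,
          ((Finset.univ.filter
              (fun π : Equiv.Perm (Fin n) => des π = d)).card : ℝ) *
            |(n : ℝ) - 1 - 2 * (d : ℝ)| := by
  have hfac : (0 : ℝ) < (n.factorial : ℝ) := by positivity
  have hcoef : (0 : ℝ) ≤ (n : ℝ) / (2 * (n.factorial : ℝ)) := by positivity
  have h1 : ∀ π : Equiv.Perm (Fin n),
      |((n : ℝ) / (2 * (n.factorial : ℝ))) *
          ∑ p ∈ Finset.univ.filter (fun p : Fin n × Fin n => p.1 < p.2),
            (Wdig (id : Fin n → Fin n) p.1 p.2 : ℝ) *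
              (Zpair (fun i => π.symm i) p.1 p.2 : ℝ)|
        = ((n : ℝ) / (2 * (n.factorial : ℝ))) * |(n : ℝ) - 1 - 2 * (des π : ℝ)| := by
    intro π
    rw [kappa_inner_sum hn π, abs_mul, abs_of_nonneg hcoef]
  rw [Finset.sum_congr rfl (fun π _ => h1 π), ← Finset.mul_sum]
  have h2 : ∑ d ∈ Finset.range n,
        ((Finset.univ.filter (fun π : Equiv.Perm (Fin n) => des π = d)).card : ℝ) *
          |(n : ℝ) - 1 - 2 * (d : ℝ)|
      = ∑ π : Equiv.Perm (Fin n), |(n : ℝ) - 1 - 2 * (des π : ℝ)| := by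
    rw [← Finset.sum_fiberwise_of_maps_to
      (fun π _ => Finset.mem_range.mpr (des_lt hn π))
      (fun π => |(n : ℝ) - 1 - 2 * (des π : ℝ)|)]
    refine Finset.sum_congr rfl fun d _ => ?_
    rw [Finset.sum_congr rfl (fun π hπ => ?_), Finset.sum_const, nsmul_eq_mul]
    simp only [Finset.mem_filter] at hπ
    rw [hπ.2]
  rw [h2]
  ring
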